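/- arXiv:1302.3813 — 2 statements merged into one kernel-verified Lean document; each statement's English description precedes it below -/
import Mathlib

section
/- Let k be a field, P, Q ∈ k[X], and let S = {(x,y,u,v) ∈ k⁴ : yu = xP(x), vx = uQ(u), yv = P(x)Q(u)}. For every α ∈ k with α ≠ 0 and P(α) = 0, the map k → S given by u ↦ (α, 0, u, u·Q(u)/α) is injective with image exactly {(x,y,u,v) ∈ S : y = 0 and x = α}. -/
open Polynomial

/-- The affine surface in `k⁴` defined by `yu = xP(x)`, `vx = uQ(u)`, `yv = P(x)Q(u)`. -/
def surf (k : Type*) [Field k] (P Q : k[X]) : Set (k × k × k × k) :=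
  {p | p.2.1 * p.2.2.1 = p.1 * P.eval p.1 ∧
       p.2.2.2 * p.1 = p.2.2.1 * Q.eval p.2.2.1 ∧
       p.2.1 * p.2.2.2 = P.eval p.1 * Q.eval p.2.2.1}

theorem stmt_4 (k : Type*) [Field k] (P Q : k[X]) (α : k)
    (hα : α ≠ 0) (hroot : P.eval α = 0) :
    Function.Injective (fun u : k => (α, (0 : k), u, u * Q.eval u / α)) ∧
    Set.range (fun u : k => (α, (0 : k), u, u * Q.eval u / α)) =
      {p ∈ surf k P Q | p.2.1 = 0 ∧ p.1 = α} := by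
  constructor
  · intro a b h
    simpa using congrArg (fun p => p.2.2.1) h
  · ext ⟨x, y, u, v⟩
    simp only [Set.mem_range, Set.mem_setOf_eq, surf, Prod.mk.injEq]
    constructor
    · rintro ⟨w, hw1, hw2, hw3, hw4⟩
      subst hw1 hw2 hw3 hw4
      refine ⟨⟨?_, ?_, ?_⟩, rfl, rfl⟩
      · simp [hroot]
      · field_simp
      · simp [hroot]
    · rintro ⟨⟨h1, h2, h3⟩, hy, hx⟩
      subst hy hx
      exact ⟨u, rfl, rfl, rfl, by rw [div_eq_iff hα]; exact h2.symm⟩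
end

section
/- Let k be a field, P, Q ∈ k[X], and let S = {(x,y,u,v) ∈ k⁴ : yu = xP(x), vx = uQ(u), yv = P(x)Q(u)}. For every a, c ∈ k* and λ, μ ∈ k* satisfying P(aX) = λ·P(X) and Q((aλ/c)·X) = μ·Q(X), the diagonal map (x,y,u,v) ↦ (a·x, c·y, (aλ/c)·u, (λμ/c)·v) maps S bijectively onto itself. -/
open Polynomial

theorem stmt_17 (k : Type*) [Field k] (P Q : k[X]) (a c l m : k)
    (ha : a ≠ 0) (hc : c ≠ 0) (hl : l ≠ 0) (hm : m ≠ 0)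
    (hP : P.comp (C a * X) = C l * P)
    (hQ : Q.comp (C (a * l / c) * X) = C m * Q) :
    Set.BijOn
      (fun p : k × k × k × k =>
        (a * p.1, c * p.2.1, (a * l / c) * p.2.2.1, (l * m / c) * p.2.2.2))
      (surf k P Q) (surf k P Q) := by
  have hb : a * l / c ≠ 0 := div_ne_zero (mul_ne_zero ha hl) hc
  have hd : l * m / c ≠ 0 := div_ne_zero (mul_ne_zero hl hm) hc
  have evP : ∀ x : k, P.eval (a * x) = l * P.eval x := fun x => by
    have := congrArg (eval x) hP
    simpa [eval_comp] using this
  have evQ : ∀ u : k, Q.eval ((a * l / c) * u) = m * Q.eval u := fun u => by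
    have := congrArg (eval u) hQ
    simpa [eval_comp] using this
  have hmap : Set.MapsTo
      (fun p : k × k × k × k =>
        (a * p.1, c * p.2.1, (a * l / c) * p.2.2.1, (l * m / c) * p.2.2.2))
      (surf k P Q) (surf k P Q) := by
    rintro ⟨x, y, u, v⟩ ⟨h1, h2, h3⟩
    have h1' : y * u = x * P.eval x := h1
    have h2' : v * x = u * Q.eval u := h2
    have h3' : y * v = P.eval x * Q.eval u := h3
    refine ⟨?_, ?_, ?_⟩ <;> simp only [evP, evQ] <;> field_simp
    · linear_combination h1'
    · linear_combination h2'
    · linear_combination h3'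
  refine ⟨hmap, fun p _ q _ h => ?_, fun p hp => ?_⟩
  · obtain ⟨x1, y1, u1, v1⟩ := p
    obtain ⟨x2, y2, u2, v2⟩ := q
    simp only [Prod.mk.injEq] at h
    obtain ⟨e1, e2, e3, e4⟩ := h
    exact Prod.ext (mul_left_cancel₀ ha e1) (Prod.ext (mul_left_cancel₀ hc e2)
      (Prod.ext (mul_left_cancel₀ hb e3) (mul_left_cancel₀ hd e4)))
  · obtain ⟨x, y, u, v⟩ := p
    obtain ⟨h1, h2, h3⟩ := hp
    refine ⟨(x / a, y / c, u / (a * l / c), v / (l * m / c)), ⟨?_, ?_, ?_⟩, ?_⟩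
    · have h1' : y * u = x * P.eval x := h1
      have hx := evP (x / a)
      rw [mul_div_cancel₀ _ ha] at hx
      simp only
      field_simp
      linear_combination h1' + x * hx
    · have h2' : v * x = u * Q.eval u := h2
      have hu := evQ (u * c / (a * l))
      rw [show a * l / c * (u * c / (a * l)) = u by field_simp] at hu
      simp only
      field_simp
      rw [show c * u / (l * a) = u * c / (a * l) by ring]
      linear_combination h2' + u * hu
    · have h3' : y * v = P.eval x * Q.eval u := h3
      have hx := evP (x / a)
      rw [mul_div_cancel₀ _ ha] at hx
      have hu := evQ (u * c / (a * l))
      rw [show a * l / c * (u * c / (a * l)) = u by field_simp] at hu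
      simp only
      field_simp
      rw [show c * u / (l * a) = u * c / (a * l) by ring]
      linear_combination h3' + (Q.eval u) * hx + (l * P.eval (x / a)) * hu
    · simp only [Prod.mk.injEq]
      refine ⟨?_, ?_, ?_, ?_⟩ <;> field_simp <;> ring
end
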